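/- For k ≥ 3 and n = 2k, the graph H(2k, k) is not 2-geodesic transitive: there exist two 2-geodesics ∅ ~ A ~ B and ∅ ~ A ~ [n] starting from ∅ (with |B| = 2, A of size k) such that no automorphism of H(2k,k) fixes ∅, and maps the first geodesic to the second, because a vertex of size 2 has 2·C(2k−2, k−1) neighbours of size k while [n] has C(2k, k) neighbours of size k, and these counts differ for k ≥ 3. -/

import Mathlib

open Finset symmDiff

/-- The graph `H(n,k)` on subsets of `[n]`: `X ~ Y` iff `|X ∆ Y| = k`. -/
def HGraph (n k : ℕ) : SimpleGraph (Finset (Fin n)) where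
  Adj X Y := (X ∆ Y).card = k ∧ X ≠ Y
  symm := by
    constructor
    intro X Y h
    exact ⟨by rw [symmDiff_comm]; exact h.1, h.2.symm⟩
  loopless := ⟨fun X h => h.2 rfl⟩

private lemma card_symmDiff_aux {α : Type*} [DecidableEq α] (s t : Finset α) :
    (s ∆ t).card + 2 * (s ∩ t).card = s.card + t.card := by
  rw [symmDiff_def, Finset.sup_eq_union,
    Finset.card_union_of_disjoint disjoint_sdiff_sdiff]
  have h1 := Finset.card_sdiff_add_card_inter s t
  have h2 := Finset.card_sdiff_add_card_inter t s
  rw [Finset.inter_comm t s] at h2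
  omega

private lemma count_fixed_singleton {α : Type*} [Fintype α] [DecidableEq α]
    (B : Finset α) (a : α) (ha : a ∈ B) (m : ℕ) :
    ((Finset.univ : Finset (Finset α)).filter fun Y => Y.card = m + 1 ∧ Y ∩ B = {a}).card
      = Nat.choose (Fintype.card α - B.card) m := by
  rw [← Finset.card_compl B, ← Finset.card_powersetCard m Bᶜ]
  apply Finset.card_nbij' (fun Y => Y.erase a) (fun Z => insert a Z)
  · intro Y hY
    simp only [mem_coe, mem_filter, mem_univ, true_and] at hY
    obtain ⟨hc, hi⟩ := hY
    have haY : a ∈ Y := by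
      have : a ∈ Y ∩ B := by rw [hi]; exact mem_singleton_self a
      exact (mem_inter.1 this).1
    rw [mem_coe, mem_powersetCard]
    constructor
    · intro x hx
      simp only [mem_erase] at hx
      rw [mem_compl]
      intro hxB
      have : x ∈ Y ∩ B := mem_inter.2 ⟨hx.2, hxB⟩
      rw [hi, mem_singleton] at this
      exact hx.1 this
    · rw [card_erase_of_mem haY, hc]
      omega
  · intro Z hZ
    rw [mem_coe, mem_powersetCard] at hZ
    obtain ⟨hsub, hc⟩ := hZ
    have haZ : a ∉ Z := fun h => (mem_compl.1 (hsub h)) ha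
    simp only [mem_coe, mem_filter, mem_univ, true_and]
    refine ⟨by rw [card_insert_of_notMem haZ, hc], ?_⟩
    ext x
    simp only [mem_inter, mem_insert, mem_singleton]
    constructor
    · rintro ⟨hx1 | hx1, hx2⟩
      · exact hx1
      · exact absurd hx2 (mem_compl.1 (hsub hx1))
    · rintro rfl
      exact ⟨Or.inl rfl, ha⟩
  · intro Y hY
    simp only [mem_coe, mem_filter, mem_univ, true_and] at hY
    have haY : a ∈ Y := by
      have : a ∈ Y ∩ B := by rw [hY.2]; exact mem_singleton_self a
      exact (mem_inter.1 this).1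
    exact insert_erase haY
  · intro Z hZ
    rw [mem_coe, mem_powersetCard] at hZ
    have haZ : a ∉ Z := fun h => (mem_compl.1 (hZ.1 h)) ha
    exact erase_insert haZ

private lemma choose_ne_aux (k : ℕ) (hk : 3 ≤ k) :
    2 * Nat.choose (2 * k - 2) (k - 1) ≠ Nat.choose (2 * k) k := by
  obtain ⟨k', rfl⟩ : ∃ k', k = k' + 1 := ⟨k - 1, by omega⟩
  have e1 : 2 * (k' + 1) - 2 = 2 * k' := by omega
  have e2 : k' + 1 - 1 = k' := by omega
  have e3 : 2 * (k' + 1) = 2 * k' + 2 := by omega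
  rw [e1, e2, e3]
  have hk' : 2 ≤ k' := by omega
  have h1 : Nat.choose (2*k'+2) (k'+1) = Nat.choose (2*k'+1) k' + Nat.choose (2*k'+1) (k'+1) := by
    have := Nat.choose_succ_succ (2*k'+1) k'
    simpa [Nat.succ_eq_add_one] using this
  have h2 : Nat.choose (2*k'+1) (k'+1) = Nat.choose (2*k'+1) k' := by
    have := Nat.choose_symm (n := 2*k'+1) (k := k'+1) (by omega)
    have e : 2*k'+1 - (k'+1) = k' := by omega
    rw [e] at this; exact this.symm
  have h3 : Nat.choose (2*k'+1) k' = Nat.choose (2*k') (k'-1) + Nat.choose (2*k') k' := by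
    have := Nat.choose_succ_succ (2*k') (k'-1)
    have e : (k' - 1) + 1 = k' := by omega
    simp only [Nat.succ_eq_add_one, e] at this
    omega
  have h4 : 0 < Nat.choose (2*k') (k'-1) := Nat.choose_pos (by omega)
  omega

/-- For `k ≥ 3` and `n = 2k`, `H(2k,k)` is not `2`-geodesic transitive: since
`2·C(2k-2,k-1) ≠ C(2k,k)`, there are `2`-geodesics `∅ ~ A ~ B` and `∅ ~ A ~ [n]`
(with `|A| = k`, `|B| = 2`) such that no automorphism fixes `∅` and maps the first
geodesic onto the second. -/
theorem stmt_19 (k n : ℕ) (hk : 3 ≤ k) (hn : n = 2 * k) :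
    2 * Nat.choose (2 * k - 2) (k - 1) ≠ Nat.choose (2 * k) k ∧
    ∃ A B : Finset (Fin n), A.card = k ∧ B.card = 2 ∧
      (HGraph n k).Adj ∅ A ∧ (HGraph n k).Adj A B ∧ (HGraph n k).Adj A Finset.univ ∧
      (HGraph n k).dist ∅ B = 2 ∧ (HGraph n k).dist ∅ Finset.univ = 2 ∧
      ¬ ∃ φ : HGraph n k ≃g HGraph n k, φ ∅ = ∅ ∧ φ A = A ∧ φ B = Finset.univ := by
  classical
  refine ⟨choose_ne_aux k hk, ?_⟩
  have hkn : k < n := by omega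
  have hn0 : 0 < n := by omega
  set a : Fin n := ⟨0, hn0⟩ with ha_def
  set b : Fin n := ⟨k, hkn⟩ with hb_def
  have hab : a ≠ b := by
    intro h
    have := congrArg Fin.val h
    simp [ha_def, hb_def] at this
    omega
  set A : Finset (Fin n) := (Finset.range k).attachFin
    (fun m hm => lt_of_lt_of_le (Finset.mem_range.1 hm) (by omega)) with hA_def
  have hmemA : ∀ x : Fin n, x ∈ A ↔ (x : ℕ) < k := by
    intro x
    rw [hA_def, Finset.mem_attachFin, Finset.mem_range]
  have hAcard : A.card = k := by
    rw [hA_def, Finset.card_attachFin, Finset.card_range]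
  have haA : a ∈ A := (hmemA a).2 (by simp [ha_def]; omega)
  have hbA : b ∉ A := fun h => by
    have := (hmemA b).1 h; simp [hb_def] at this
  set B : Finset (Fin n) := {a, b} with hB_def
  have hBcard : B.card = 2 := by
    rw [hB_def, Finset.card_insert_of_notMem (by simp [hab]), Finset.card_singleton]
  have hcardU : (Finset.univ : Finset (Fin n)).card = n := by
    simp
  -- basic symmDiff facts
  have hsd_empty : ∀ Y : Finset (Fin n), (∅ : Finset (Fin n)) ∆ Y = Y := by
    intro Y; simp [symmDiff_def]
  have hsd_univ_card : ∀ Y : Finset (Fin n), Y.card = k → (Y ∆ Finset.univ).card = k := by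
    intro Y hY
    have h := card_symmDiff_aux Y (Finset.univ : Finset (Fin n))
    rw [Finset.inter_univ, hcardU, hY] at h
    omega
  -- adjacency to ∅ characterization
  have hadj_empty : ∀ Y : Finset (Fin n), (HGraph n k).Adj ∅ Y ↔ Y.card = k := by
    intro Y
    constructor
    · intro h
      have := h.1
      rwa [hsd_empty] at this
    · intro h
      refine ⟨by rwa [hsd_empty], ?_⟩
      intro he
      rw [← he, Finset.card_empty] at h
      omega
  have hadj_univ : ∀ Y : Finset (Fin n), Y.card = k → (HGraph n k).Adj Y Finset.univ := by
    intro Y hY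
    refine ⟨hsd_univ_card Y hY, ?_⟩
    intro he
    rw [he, hcardU] at hY
    omega
  -- Adj A B
  have hAB_inter : A ∩ B = {a} := by
    ext x
    simp only [hB_def, Finset.mem_inter, Finset.mem_insert, Finset.mem_singleton]
    constructor
    · rintro ⟨hx, rfl | rfl⟩
      · rfl
      · exact absurd hx hbA
    · rintro rfl
      exact ⟨haA, Or.inl rfl⟩
  have hadjAB : (HGraph n k).Adj A B := by
    refine ⟨?_, ?_⟩
    · have h := card_symmDiff_aux A B
      rw [hAB_inter, hAcard, hBcard, Finset.card_singleton] at h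
      omega
    · intro he
      rw [he, hBcard] at hAcard
      omega
  -- dist facts
  have hdist2 : ∀ C : Finset (Fin n), (HGraph n k).Adj A C → C ≠ ∅ →
      ¬ (HGraph n k).Adj ∅ C → (HGraph n k).dist ∅ C = 2 := by
    intro C hAC hCne hnadj
    have h1 : (HGraph n k).Adj ∅ A := (hadj_empty A).2 hAcard
    have hle := SimpleGraph.dist_le (SimpleGraph.Walk.cons h1
      (SimpleGraph.Walk.cons hAC SimpleGraph.Walk.nil))
    simp only [SimpleGraph.Walk.length_cons, SimpleGraph.Walk.length_nil] at hle
    have h0 : (HGraph n k).dist ∅ C ≠ 0 := by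
      intro hz
      rw [SimpleGraph.dist_eq_zero_iff_eq_or_not_reachable] at hz
      rcases hz with hz | hz
      · exact hCne hz.symm
      · exact hz ⟨SimpleGraph.Walk.cons h1 (SimpleGraph.Walk.cons hAC SimpleGraph.Walk.nil)⟩
    have h1' : (HGraph n k).dist ∅ C ≠ 1 := by
      intro hz
      rw [SimpleGraph.dist_eq_one_iff_adj] at hz
      exact hnadj hz
    omega
  have hadjAU : (HGraph n k).Adj A Finset.univ := hadj_univ A hAcard
  have hdistB : (HGraph n k).dist ∅ B = 2 := by
    apply hdist2 B hadjAB
    · intro he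
      rw [he, Finset.card_empty] at hBcard
      omega
    · intro hadj
      have := (hadj_empty B).1 hadj
      omega
  have hdistU : (HGraph n k).dist ∅ Finset.univ = 2 := by
    apply hdist2 _ hadjAU
    · intro he
      rw [he, Finset.card_empty] at hcardU
      omega
    · intro hadj
      have := (hadj_empty _).1 hadj
      rw [hcardU] at this
      omega
  refine ⟨A, B, hAcard, hBcard, (hadj_empty A).2 hAcard, hadjAB, hadjAU, hdistB, hdistU, ?_⟩
  rintro ⟨φ, hphi0, hphiA, hphiB⟩
  -- common neighbourhood counting
  set S₁ : Finset (Finset (Fin n)) := Finset.univ.filter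
    (fun Y => (HGraph n k).Adj ∅ Y ∧ (HGraph n k).Adj B Y) with hS₁
  set S₂ : Finset (Finset (Fin n)) := Finset.univ.filter
    (fun Y => (HGraph n k).Adj ∅ Y ∧ (HGraph n k).Adj Finset.univ Y) with hS₂
  have hmap : ∀ {X Y : Finset (Fin n)}, (HGraph n k).Adj X Y → (HGraph n k).Adj (φ X) (φ Y) :=
    fun h => φ.map_rel_iff.2 h
  have hcard_eq : S₁.card = S₂.card := by
    apply Finset.card_nbij' (fun Y => φ Y) (fun Z => φ.symm Z)
    · intro Y hY
      simp only [hS₁, Finset.mem_coe, Finset.mem_filter, Finset.mem_univ, true_and] at hY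
      simp only [hS₂, Finset.mem_coe, Finset.mem_filter, Finset.mem_univ, true_and]
      constructor
      · have := hmap hY.1; rwa [hphi0] at this
      · have := hmap hY.2; rwa [hphiB] at this
    · intro Z hZ
      simp only [hS₂, Finset.mem_coe, Finset.mem_filter, Finset.mem_univ, true_and] at hZ
      simp only [hS₁, Finset.mem_coe, Finset.mem_filter, Finset.mem_univ, true_and]
      constructor
      · apply φ.map_rel_iff.1
        rw [hphi0, φ.apply_symm_apply]
        exact hZ.1
      · apply φ.map_rel_iff.1
        rw [hphiB, φ.apply_symm_apply]
        exact hZ.2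
    · intro Y _; exact φ.symm_apply_apply Y
    · intro Z _; exact φ.apply_symm_apply Z
  -- S₂ = size-k sets
  have hS₂card : S₂.card = Nat.choose (2 * k) k := by
    have : S₂ = Finset.powersetCard k Finset.univ := by
      ext Y
      simp only [hS₂, Finset.mem_filter, Finset.mem_univ, true_and,
        Finset.mem_powersetCard_univ]
      constructor
      · intro h
        exact (hadj_empty Y).1 h.1
      · intro h
        exact ⟨(hadj_empty Y).2 h, ((hadj_univ Y h).symm)⟩
    rw [this, Finset.card_powersetCard, hcardU, hn]
  -- S₁ characterization
  have hS₁char : ∀ Y : Finset (Fin n),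
      Y ∈ S₁ ↔ (Y.card = k ∧ Y ∩ B = {a}) ∨ (Y.card = k ∧ Y ∩ B = {b}) := by
    intro Y
    simp only [hS₁, Finset.mem_filter, Finset.mem_univ, true_and]
    constructor
    · rintro ⟨h1, h2⟩
      have hYk : Y.card = k := (hadj_empty Y).1 h1
      have hsd := card_symmDiff_aux B Y
      rw [h2.1, hBcard, hYk] at hsd
      have hint : (B ∩ Y).card = 1 := by omega
      obtain ⟨c, hc⟩ := Finset.card_eq_one.1 hint
      have hcB : c ∈ B := by
        have : c ∈ B ∩ Y := by rw [hc]; exact Finset.mem_singleton_self c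
        exact (Finset.mem_inter.1 this).1
      rw [Finset.inter_comm] at hc
      rw [hB_def, Finset.mem_insert, Finset.mem_singleton] at hcB
      rcases hcB with rfl | rfl
      · exact Or.inl ⟨hYk, hc⟩
      · exact Or.inr ⟨hYk, hc⟩
    · intro h
      have hYk : Y.card = k := by rcases h with ⟨h, _⟩ | ⟨h, _⟩ <;> exact h
      have hint : (Y ∩ B).card = 1 := by
        rcases h with ⟨_, h⟩ | ⟨_, h⟩ <;> rw [h, Finset.card_singleton]
      refine ⟨(hadj_empty Y).2 hYk, ?_, ?_⟩
      · have hsd := card_symmDiff_aux B Y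
        rw [Finset.inter_comm B Y, hint, hBcard, hYk] at hsd
        omega
      · intro he
        rw [← he, hBcard] at hYk
        omega
  -- count S₁
  have hcount : ∀ c : Fin n, c ∈ B →
      (Finset.univ.filter fun Y : Finset (Fin n) => Y.card = k ∧ Y ∩ B = {c}).card
        = Nat.choose (2 * k - 2) (k - 1) := by
    intro c hc
    have := count_fixed_singleton B c hc (k - 1)
    rw [show k - 1 + 1 = k from by omega] at this
    rw [this, Fintype.card_fin, hBcard, hn]
  have hS₁card : S₁.card = 2 * Nat.choose (2 * k - 2) (k - 1) := by
    have hunion : S₁ =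
        (Finset.univ.filter fun Y : Finset (Fin n) => Y.card = k ∧ Y ∩ B = {a}) ∪
        (Finset.univ.filter fun Y : Finset (Fin n) => Y.card = k ∧ Y ∩ B = {b}) := by
      ext Y
      rw [hS₁char Y, Finset.mem_union, Finset.mem_filter, Finset.mem_filter]
      simp only [Finset.mem_univ, true_and]
    have hdisj : Disjoint
        (Finset.univ.filter fun Y : Finset (Fin n) => Y.card = k ∧ Y ∩ B = {a})
        (Finset.univ.filter fun Y : Finset (Fin n) => Y.card = k ∧ Y ∩ B = {b}) := by
      rw [Finset.disjoint_left]
      intro Y hY1 hY2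
      simp only [Finset.mem_filter, Finset.mem_univ, true_and] at hY1 hY2
      apply hab
      have : ({a} : Finset (Fin n)) = {b} := by rw [← hY1.2, hY2.2]
      simpa using this
    rw [hunion, Finset.card_union_of_disjoint hdisj,
      hcount a (by rw [hB_def]; exact Finset.mem_insert_self a _),
      hcount b (by rw [hB_def]; simp)]
    omega
  exact choose_ne_aux k hk (by rw [← hS₁card, hcard_eq, hS₂card])
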